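/- Let 0 < ε < 1/2. Let M be a matroid on a finite ground set N with weight function w : N → ℝ, w(e) > 0 for all e, and let E be a collection of pairwise disjoint two-element subsets of N, each independent in M; the weight of a pair P ∈ E is w(P) = ∑_{e∈P} w(e). Suppose there are pairwise disjoint intervals [l_1,r_1], …, [l_k,r_k] with 0 < l_j ≤ r_j and l_{j+1} > r_j/ε, such that every pair in E has its weight in exactly one interval, and let E_j = {P ∈ E : l_j ≤ w(P) ≤ r_j}. For each j ∈ {1,…,k} let I_j ⊆ E_j be a collection of pairs such that ⋃_{P∈I_j} P is independent in M. Then there exists a collection I ⊆ ⋃_{j=1}^k I_j such that ⋃_{P∈I} P is independent in M and ∑_{P∈I} w(P) ≥ (1 − 4ε) · ∑_{j=1}^{k} ∑_{P∈I_j} w(P). -/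

import Mathlib

open Finset

/-- A matroid on a finite ground set, given by its family of independent sets. -/
structure FinMatroid (α : Type*) [DecidableEq α] [Fintype α] where
  Indep : Finset α → Prop
  indep_empty : Indep ∅
  indep_subset : ∀ ⦃A B : Finset α⦄, A ⊆ B → Indep B → Indep A
  indep_exchange : ∀ ⦃A B : Finset α⦄, Indep A → Indep B → B.card < A.card →
    ∃ x ∈ A \ B, Indep (insert x B)

/-- The rank of a set `S` in a matroid: the size of a largest independent subset of `S`. -/
noncomputable def FinMatroid.rank {α : Type*} [DecidableEq α] [Fintype α]
    (M : FinMatroid α) (S : Finset α) : ℕ :=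
  sSup {n : ℕ | ∃ I ⊆ S, M.Indep I ∧ I.card = n}

/-- The rank of `S` with respect to an arbitrary independence predicate. -/
noncomputable def frank {β : Type*} (Ind : Finset β → Prop) (S : Finset β) : ℕ :=
  sSup {n : ℕ | ∃ I ⊆ S, Ind I ∧ I.card = n}

variable {α : Type*} [DecidableEq α] [Fintype α]

/-- The unfolded ground set `N = {(e,i) : e ∈ N', 1 ≤ i ≤ w e}`. -/
def unfoldGround (w : α → ℕ) : Finset (α × ℕ) :=
  Finset.univ.biUnion fun e => (Finset.Icc 1 (w e)).image fun i => (e, i)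

/-- The `i`-th layer projection `{e ∈ N' : (e,i) ∈ I}`. -/
def proj1 (I : Finset (α × ℕ)) (i : ℕ) : Finset α :=
  Finset.univ.filter fun e => (e, i) ∈ I

/-- The `i`-th reverse-layer projection `{e ∈ N' : (e, w e - i + 1) ∈ I}`. -/
def proj2 (w : α → ℕ) (I : Finset (α × ℕ)) (i : ℕ) : Finset α :=
  Finset.univ.filter fun e => i ≤ w e ∧ (e, w e - i + 1) ∈ I

/-- Independence in the unfolded matroid `M₁`. -/
def UnfoldIndep1 (M' : FinMatroid α) (w : α → ℕ) (W : ℕ) (I : Finset (α × ℕ)) : Prop :=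
  I ⊆ unfoldGround w ∧ ∀ i ∈ Finset.Icc 1 W, M'.Indep (proj1 I i)

/-- Independence in the unfolded matroid `M₂`. -/
def UnfoldIndep2 (M' : FinMatroid α) (w : α → ℕ) (W : ℕ) (I : Finset (α × ℕ)) : Prop :=
  I ⊆ unfoldGround w ∧ ∀ i ∈ Finset.Icc 1 W, M'.Indep (proj2 w I i)

/-- The unfolding `{(e,i) : e ∈ S', 1 ≤ i ≤ w e}` of a set `S' ⊆ N'`. -/
def unfoldSet (w : α → ℕ) (S' : Finset α) : Finset (α × ℕ) :=
  S'.biUnion fun e => (Finset.Icc 1 (w e)).image fun i => (e, i)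


lemma exists_extend (M : FinMatroid α) :
    ∀ (n : ℕ) (A B : Finset α), A.card ≤ B.card + n → M.Indep A → M.Indep B →
    ∃ B', B ⊆ B' ∧ B' ⊆ A ∪ B ∧ M.Indep B' ∧ A.card ≤ B'.card := by
  intro n
  induction n with
  | zero => exact fun A B h hA hB => ⟨B, subset_rfl, subset_union_right, hB, by omega⟩
  | succ n ih =>
    intro A B h hA hB
    by_cases hc : A.card ≤ B.card
    · exact ⟨B, subset_rfl, subset_union_right, hB, hc⟩
    · obtain ⟨x, hx, hind⟩ := M.indep_exchange hA hB (by omega)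
      rw [mem_sdiff] at hx
      obtain ⟨B', h1, h2, h3, h4⟩ := ih A (insert x B)
        (by rw [card_insert_of_notMem hx.2]; omega) hA hind
      refine ⟨B', (subset_insert _ _).trans h1, fun y hy => ?_, h3, h4⟩
      have := h2 hy
      simp only [mem_union, mem_insert] at this ⊢
      rcases this with h | h | h
      · exact Or.inl h
      · exact Or.inl (h ▸ hx.1)
      · exact Or.inr h

lemma select_pairs (M : FinMatroid α) (S : Finset (Finset α)) (B : Finset α)
    (hSd : ∀ P ∈ S, ∀ Q ∈ S, P ≠ Q → Disjoint P Q)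
    (hA : M.Indep (S.biUnion id)) (hB : M.Indep B) :
    ∃ T ⊆ S, M.Indep (B ∪ T.biUnion id) ∧ (S \ T).card ≤ B.card := by
  set A := S.biUnion id with hAdef
  obtain ⟨B', h1, h2, h3, h4⟩ := exists_extend M A.card A B (by omega) hA hB
  refine ⟨S.filter (fun P => P ⊆ B'), filter_subset _ _, ?_, ?_⟩
  · refine M.indep_subset ?_ h3
    refine union_subset h1 ?_
    intro x hx
    simp only [mem_biUnion, mem_filter, id] at hx
    obtain ⟨P, ⟨_, hPB⟩, hxP⟩ := hx
    exact hPB hxP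
  · -- count
    have hADB : (A \ B').card ≤ B.card := by
      have e1 : (A \ B').card + (A ∩ B').card = A.card := by
        rw [card_sdiff_add_card_inter]
      have e2 : (B' ∩ A).card + (B' \ A).card = B'.card := by
        rw [card_inter_add_card_sdiff]
      have e3 : (B' \ A).card ≤ B.card := by
        refine card_le_card ?_
        intro x hx
        rw [mem_sdiff] at hx
        rcases mem_union.1 (h2 hx.1) with h | h
        · exact absurd h hx.2
        · exact h
      have e4 : (B' ∩ A).card = (A ∩ B').card := by rw [inter_comm]
      omega
    have key : (S \ S.filter (fun P => P ⊆ B')).card ≤ (A \ B').card := by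
      set D := S \ S.filter (fun P => P ⊆ B') with hD
      have hDsub : D ⊆ S := sdiff_subset
      calc D.card = ∑ P ∈ D, 1 := by simp
        _ ≤ ∑ P ∈ D, (P \ B').card := by
            refine sum_le_sum fun P hP => ?_
            have : ¬ P ⊆ B' := by
              rw [hD, mem_sdiff, mem_filter] at hP
              exact fun h => hP.2 ⟨hP.1, h⟩
            have : (P \ B').Nonempty := by
              rw [sdiff_nonempty]; exact this
            exact card_pos.2 this
        _ = (D.biUnion (fun P => P \ B')).card := by
            rw [card_biUnion]
            intro P hP Q hQ hne
            exact (hSd P (hDsub hP) Q (hDsub hQ) hne).mono sdiff_le sdiff_le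
        _ ≤ (A \ B').card := by
            refine card_le_card ?_
            intro x hx
            simp only [mem_biUnion] at hx
            obtain ⟨P, hP, hxP⟩ := hx
            rw [mem_sdiff] at hxP ⊢
            exact ⟨mem_biUnion.2 ⟨P, hDsub hP, hxP.1⟩, hxP.2⟩
    exact key.trans hADB

lemma main_ind (ε : ℝ) (hε0 : 0 < ε)
    (M : FinMatroid α) (w : α → ℝ)
    (E : Finset (Finset α))
    (hpair : ∀ P ∈ E, P.card = 2 ∧ M.Indep P)
    (hdisj : ∀ P ∈ E, ∀ Q ∈ E, P ≠ Q → Disjoint P Q) :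
    ∀ (k : ℕ) (l r : ℕ → ℝ) (I' : ℕ → Finset (Finset α)),
    (∀ j < k, 0 < l j ∧ l j ≤ r j) →
    (∀ j, j + 1 < k → r j / ε < l (j + 1)) →
    (∀ j < k, ∀ P ∈ I' j, P ∈ E ∧ l j ≤ ∑ e ∈ P, w e ∧ ∑ e ∈ P, w e ≤ r j) →
    (∀ j < k, M.Indep ((I' j).biUnion id)) →
    ∃ J : ℕ → Finset (Finset α),
      (∀ j, J j ⊆ I' j) ∧
      M.Indep ((range k).biUnion (fun j => (J j).biUnion id)) ∧
      ∑ j ∈ range k, (∑ P ∈ I' j, ∑ e ∈ P, w e)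
        - ∑ j ∈ range k, (∑ P ∈ J j, ∑ e ∈ P, w e)
        ≤ ∑ j ∈ range k, ((J j).card : ℝ) * (2 * (∑ t ∈ Icc 1 j, ε ^ t) * l j) := by
  intro k
  induction k with
  | zero =>
    intro l r I' _ _ _ _
    exact ⟨fun _ => ∅, fun _ => empty_subset _, by simpa using M.indep_empty, by simp⟩
  | succ k ih =>
    intro l r I' hlr hgap hsub hind
    obtain ⟨J₀, hJ₀sub, hJ₀ind, hJ₀w⟩ := ih (fun j => l (j+1)) (fun j => r (j+1))
      (fun j => I' (j+1))
      (fun j hj => hlr (j+1) (by omega))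
      (fun j hj => hgap (j+1) (by omega))
      (fun j hj => hsub (j+1) (by omega))
      (fun j hj => hind (j+1) (by omega))
    set B := (range k).biUnion (fun j => (J₀ j).biUnion id) with hBdef
    obtain ⟨T, hTsub, hTind, hTcard⟩ := select_pairs M (I' 0) B
      (fun P hP Q hQ hne =>
        hdisj P (hsub 0 (by omega) P hP).1 Q (hsub 0 (by omega) Q hQ).1 hne)
      (hind 0 (by omega)) hJ₀ind
    refine ⟨fun j => if j = 0 then T else J₀ (j-1), fun j => ?_, ?_, ?_⟩
    · rcases j with _ | i
      · simpa using hTsub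
      · simpa using hJ₀sub i
    · refine M.indep_subset ?_ hTind
      intro x hx
      simp only [mem_biUnion, mem_range, id] at hx
      obtain ⟨j, hj, P, hP, hxP⟩ := hx
      rcases j with _ | i
      · simp only [if_pos rfl] at hP
        exact mem_union.2 (Or.inr (mem_biUnion.2 ⟨P, hP, hxP⟩))
      · simp only [Nat.succ_ne_zero, if_false, Nat.add_sub_cancel] at hP
        refine mem_union.2 (Or.inl ?_)
        rw [hBdef]
        simp only [mem_biUnion, mem_range, id]
        exact ⟨i, by omega, P, hP, hxP⟩
    · -- the weight bound
      have hgeo : ∀ j, j < k → r 0 ≤ ε ^ (j+1) * l (j+1) := by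
        intro j
        induction j with
        | zero =>
          intro h0
          have := hgap 0 (by omega)
          have := (div_lt_iff₀ hε0).1 this
          rw [pow_one]
          linarith [mul_comm (l 1) ε]
        | succ j ihj =>
          intro h
          have h1 := ihj (by omega)
          have h2 := (hlr (j+1) (by omega)).2
          have h3 := hgap (j+1) (by omega)
          have h3' := (div_lt_iff₀ hε0).1 h3
          have hp : (0:ℝ) < ε ^ (j+1) := pow_pos hε0 _
          calc r 0 ≤ ε ^ (j+1) * l (j+1) := h1
            _ ≤ ε ^ (j+1) * r (j+1) := by nlinarith
            _ ≤ ε ^ (j+1) * (ε * l (j+2)) := by nlinarith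
            _ = ε ^ (j+2) * l (j+2) := by ring
      have hBcard : B.card ≤ ∑ j ∈ range k, 2 * (J₀ j).card := by
        calc B.card ≤ ∑ j ∈ range k, ((J₀ j).biUnion id).card := card_biUnion_le
          _ ≤ ∑ j ∈ range k, 2 * (J₀ j).card := by
              refine sum_le_sum fun j hj => ?_
              calc ((J₀ j).biUnion id).card ≤ ∑ P ∈ J₀ j, P.card := by
                    simpa using card_biUnion_le (s := J₀ j) (t := id)
                _ = 2 * (J₀ j).card := by
                    rw [sum_congr rfl (fun P hP => (hpair P
                      (hsub (j+1) (by simp at hj; omega) P (hJ₀sub j hP)).1).1)]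
                    simp [mul_comm]
      have hr0 : (0:ℝ) ≤ r 0 := le_trans (hlr 0 (by omega)).1.le (hlr 0 (by omega)).2
      -- class 0 loss bound
      have h2 : (∑ P ∈ I' 0, ∑ e ∈ P, w e) - (∑ P ∈ T, ∑ e ∈ P, w e)
          ≤ ∑ j ∈ range k, ((J₀ j).card : ℝ) * (2 * ε ^ (j+1) * l (j+1)) := by
        have hsd : (∑ P ∈ I' 0 \ T, ∑ e ∈ P, w e) + (∑ P ∈ T, ∑ e ∈ P, w e)
            = ∑ P ∈ I' 0, ∑ e ∈ P, w e := sum_sdiff hTsub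
        have hb1 : (∑ P ∈ I' 0 \ T, ∑ e ∈ P, w e) ≤ ((I' 0 \ T).card : ℝ) * r 0 := by
          calc (∑ P ∈ I' 0 \ T, ∑ e ∈ P, w e) ≤ ∑ P ∈ I' 0 \ T, r 0 :=
              sum_le_sum fun P hP =>
                (hsub 0 (by omega) P (mem_sdiff.1 hP).1).2.2
            _ = ((I' 0 \ T).card : ℝ) * r 0 := by rw [sum_const]; simp [nsmul_eq_mul]
        have hb2 : ((I' 0 \ T).card : ℝ) * r 0 ≤ (B.card : ℝ) * r 0 := by
          have : ((I' 0 \ T).card : ℝ) ≤ (B.card : ℝ) := by exact_mod_cast hTcard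
          nlinarith
        have hb3 : (B.card : ℝ) * r 0 ≤ (∑ j ∈ range k, 2 * ((J₀ j).card:ℝ)) * r 0 := by
          have : (B.card : ℝ) ≤ ∑ j ∈ range k, 2 * ((J₀ j).card:ℝ) := by
            exact_mod_cast hBcard.trans_eq (by push_cast; rfl)
          nlinarith
        have hb4 : (∑ j ∈ range k, 2 * ((J₀ j).card:ℝ)) * r 0
            ≤ ∑ j ∈ range k, ((J₀ j).card : ℝ) * (2 * ε ^ (j+1) * l (j+1)) := by
          rw [sum_mul]
          refine sum_le_sum fun j hj => ?_
          have hg := hgeo j (mem_range.1 hj)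
          have hc : (0:ℝ) ≤ ((J₀ j).card : ℝ) := Nat.cast_nonneg _
          nlinarith
        linarith
      -- reorganize sums over range (k+1)
      rw [sum_range_succ' (fun j => ∑ P ∈ I' j, ∑ e ∈ P, w e) k,
          sum_range_succ' _ k, sum_range_succ' _ k]
      simp only [Nat.succ_ne_zero, if_false, Nat.add_sub_cancel, if_pos rfl]
      have hS0 : (∑ t ∈ Icc 1 0, ε ^ t) = 0 := by
        rw [show (Icc 1 0 : Finset ℕ) = ∅ from rfl]; simp
      have hsplit : ∀ j, (∑ t ∈ Icc 1 (j+1), ε ^ t) = (∑ t ∈ Icc 1 j, ε ^ t) + ε ^ (j+1) := by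
        intro j
        exact Finset.sum_Icc_succ_top (by omega) _
      have hrhs : ∑ j ∈ range k, ((J₀ j).card : ℝ) * (2 * (∑ t ∈ Icc 1 (j+1), ε ^ t) * l (j+1))
          = ∑ j ∈ range k, ((J₀ j).card : ℝ) * (2 * (∑ t ∈ Icc 1 j, ε ^ t) * l (j+1))
            + ∑ j ∈ range k, ((J₀ j).card : ℝ) * (2 * ε ^ (j+1) * l (j+1)) := by
        rw [← sum_add_distrib]
        refine sum_congr rfl fun j hj => ?_
        rw [hsplit j]; ring
      rw [hrhs, hS0]
      simp only [if_true, mul_zero, zero_mul, add_zero]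
      have := hJ₀w
      linarith

/-- the greedy merge guarantee for weighted matroid parity: given
feasible parity solutions in each weight class of an `ε⁻¹`-spread instance,
there is a feasible parity solution inside their union of weight at least
`(1 - 4ε)` times the total weight. -/
theorem parity_spread_merge (ε : ℝ) (hε0 : 0 < ε) (hε : ε < 1/2)
    (M : FinMatroid α) (w : α → ℝ) (hw : ∀ e : α, 0 < w e)
    (E : Finset (Finset α))
    (hpair : ∀ P ∈ E, P.card = 2 ∧ M.Indep P)
    (hdisj : ∀ P ∈ E, ∀ Q ∈ E, P ≠ Q → Disjoint P Q)
    (k : ℕ) (l r : ℕ → ℝ)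
    (hlr : ∀ j < k, 0 < l j ∧ l j ≤ r j)
    (hgap : ∀ j, j + 1 < k → r j / ε < l (j + 1))
    (hclass : ∀ P ∈ E, ∃ j < k, l j ≤ ∑ e ∈ P, w e ∧ ∑ e ∈ P, w e ≤ r j)
    (I' : ℕ → Finset (Finset α))
    (hI'sub : ∀ j < k, ∀ P ∈ I' j, P ∈ E ∧ l j ≤ ∑ e ∈ P, w e ∧ ∑ e ∈ P, w e ≤ r j)
    (hI'ind : ∀ j < k, M.Indep ((I' j).biUnion id)) :
    ∃ I ⊆ (Finset.range k).biUnion I', M.Indep (I.biUnion id) ∧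
      (1 - 4 * ε) * ∑ j ∈ Finset.range k, ∑ P ∈ I' j, ∑ e ∈ P, w e ≤
        ∑ P ∈ I, ∑ e ∈ P, w e := by
  obtain ⟨J, hJsub, hJind, hJw⟩ :=
    main_ind ε hε0 M w E hpair hdisj k l r I' hlr hgap hI'sub hI'ind
  refine ⟨(range k).biUnion J, ?_, ?_, ?_⟩
  · intro P hP
    simp only [mem_biUnion, mem_range] at hP ⊢
    obtain ⟨j, hj, hPj⟩ := hP
    exact ⟨j, hj, hJsub j hPj⟩
  · have heq : ((range k).biUnion J).biUnion id
        = (range k).biUnion (fun j => (J j).biUnion id) := by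
      ext x
      simp only [mem_biUnion, mem_range, id]
      constructor
      · rintro ⟨P, ⟨j, hj, hPj⟩, hx⟩; exact ⟨j, hj, P, hPj, hx⟩
      · rintro ⟨j, hj, P, hPj, hx⟩; exact ⟨P, ⟨j, hj, hPj⟩, hx⟩
    rw [heq]; exact hJind
  · -- interval separation
    have hstep : ∀ m, m + 1 < k → r m < l (m + 1) := by
      intro m hm
      have h1 := hgap m hm
      have hrm : 0 < r m := lt_of_lt_of_le (hlr m (by omega)).1 (hlr m (by omega)).2
      have : r m ≤ r m / ε := by
        rw [le_div_iff₀ hε0]; nlinarith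
      linarith
    have hrl : ∀ d j, j + 1 + d < k → r j < l (j + 1 + d) := by
      intro d
      induction d with
      | zero => intro j hj; exact hstep j (by omega)
      | succ d ihd =>
        intro j hj
        have h1 := ihd j (by omega)
        have h2 := (hlr (j + 1 + d) (by omega)).2
        have h3 := hstep (j + 1 + d) (by omega)
        have he : j + 1 + (d + 1) = (j + 1 + d) + 1 := by omega
        rw [he]
        linarith
    have hdisjJ : Set.PairwiseDisjoint (↑(range k) : Set ℕ) J := by
      intro i hi j hj hij
      simp only [coe_range, Set.mem_Iio] at hi hj
      show Disjoint (J i) (J j)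
      rw [Finset.disjoint_left]
      intro P hPi hPj
      have h1 := (hI'sub i hi P (hJsub i hPi)).2
      have h2 := (hI'sub j hj P (hJsub j hPj)).2
      rcases lt_or_gt_of_ne hij with h | h
      · have := hrl (j - (i + 1)) i (by omega)
        have he : i + 1 + (j - (i + 1)) = j := by omega
        rw [he] at this
        linarith
      · have := hrl (i - (j + 1)) j (by omega)
        have he : j + 1 + (i - (j + 1)) = i := by omega
        rw [he] at this
        linarith
    have hsum : ∑ P ∈ (range k).biUnion J, ∑ e ∈ P, w e
        = ∑ j ∈ range k, ∑ P ∈ J j, ∑ e ∈ P, w e := sum_biUnion hdisjJ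
    rw [hsum]
    -- geometric bound
    have hinv : ∀ j : ℕ, (∑ t ∈ Icc 1 j, ε ^ t) ≤ 2 * ε * (1 - ε ^ j) := by
      intro j
      induction j with
      | zero => simp [show (Icc 1 0 : Finset ℕ) = ∅ from rfl]
      | succ j ihj =>
        rw [Finset.sum_Icc_succ_top (by omega)]
        have hp : (0:ℝ) ≤ ε ^ j := pow_nonneg hε0.le _
        have he : ε ^ (j+1) = ε * ε ^ j := by ring
        nlinarith [mul_nonneg hε0.le hp]
    have hgeom : ∀ j : ℕ, (∑ t ∈ Icc 1 j, ε ^ t) ≤ 2 * ε := by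
      intro j
      have hp : (0:ℝ) ≤ ε ^ j := pow_nonneg hε0.le _
      nlinarith [hinv j]
    -- per-class bound
    have hper : ∀ j ∈ range k,
        ((J j).card : ℝ) * (2 * (∑ t ∈ Icc 1 j, ε ^ t) * l j)
          ≤ 4 * ε * ∑ P ∈ J j, ∑ e ∈ P, w e := by
      intro j hj
      rw [mem_range] at hj
      have hl0 : 0 < l j := (hlr j hj).1
      have hcl : ((J j).card : ℝ) * l j ≤ ∑ P ∈ J j, ∑ e ∈ P, w e := by
        calc ((J j).card : ℝ) * l j = ∑ P ∈ J j, l j := by rw [sum_const, nsmul_eq_mul]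
          _ ≤ ∑ P ∈ J j, ∑ e ∈ P, w e :=
            sum_le_sum fun P hP => (hI'sub j hj P (hJsub j hP)).2.1
      have hg := hgeom j
      have hcnn : (0:ℝ) ≤ ((J j).card : ℝ) := Nat.cast_nonneg _
      have hSnn : (0:ℝ) ≤ ∑ t ∈ Icc 1 j, ε ^ t :=
        sum_nonneg fun t _ => pow_nonneg hε0.le _
      nlinarith [mul_le_mul_of_nonneg_left hg
          (by positivity : (0:ℝ) ≤ 2 * ((J j).card : ℝ) * l j),
        mul_le_mul_of_nonneg_left hcl (by positivity : (0:ℝ) ≤ 4 * ε)]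
    have hloss : ∑ j ∈ range k, (∑ P ∈ I' j, ∑ e ∈ P, w e)
        - ∑ j ∈ range k, (∑ P ∈ J j, ∑ e ∈ P, w e)
        ≤ 4 * ε * ∑ j ∈ range k, ∑ P ∈ J j, ∑ e ∈ P, w e := by
      calc _ ≤ ∑ j ∈ range k, ((J j).card : ℝ) * (2 * (∑ t ∈ Icc 1 j, ε ^ t) * l j) := hJw
        _ ≤ ∑ j ∈ range k, 4 * ε * ∑ P ∈ J j, ∑ e ∈ P, w e := sum_le_sum hper
        _ = 4 * ε * ∑ j ∈ range k, ∑ P ∈ J j, ∑ e ∈ P, w e := by rw [mul_sum]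
    have hmono : ∑ j ∈ range k, (∑ P ∈ J j, ∑ e ∈ P, w e)
        ≤ ∑ j ∈ range k, (∑ P ∈ I' j, ∑ e ∈ P, w e) := by
      refine sum_le_sum fun j hj => ?_
      refine sum_le_sum_of_subset_of_nonneg (hJsub j) fun P _ _ => ?_
      exact sum_nonneg fun e _ => (hw e).le
    nlinarith
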